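/- Under the conditions of the selection-martingale setting, the process W_t = exp(λS(t) − N(t)·φ_μ(λ)) with φ_μ(λ) = log(1 − μ + μ·exp(λ)) and λ < 0 is a supermartingale when all selected variables X^a_t ∈ [0,1] have E[X^a_t] ≥ μ. -/

import Mathlib

open MeasureTheory ProbabilityTheory

lemma exp_conv {l x : ℝ} (hx0 : 0 ≤ x) (hx1 : x ≤ 1) :
    Real.exp (l * x) ≤ 1 + (Real.exp l - 1) * x := by
  have h := convexOn_exp.2 (Set.mem_univ (0:ℝ)) (Set.mem_univ l)
    (by linarith : (0:ℝ) ≤ 1 - x) hx0 (by ring)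
  simp only [smul_eq_mul, mul_zero, zero_add, Real.exp_zero, mul_one] at h
  calc Real.exp (l * x) = Real.exp (x * l) := by rw [mul_comm]
    _ ≤ (1 - x) + x * Real.exp l := h
    _ = 1 + (Real.exp l - 1) * x := by ring

lemma integrable_of_bdd {Ω : Type*} {m : MeasurableSpace Ω} {P : Measure Ω}
    [IsProbabilityMeasure P] {f : Ω → ℝ} (hf : Measurable f) (C : ℝ)
    (h : ∀ ω, |f ω| ≤ C) : Integrable f P :=
  (integrable_const C).mono' hf.aestronglyMeasurable (Filter.Eventually.of_forall h)

theorem stmt_11 {Ω : Type*} {m : MeasurableSpace Ω} (P : Measure Ω)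
    [IsProbabilityMeasure P] (F : Filtration ℕ m)
    {R : Type*} [Fintype R]
    (X : R → ℕ → Ω → ℝ)
    (hXbound : ∀ a t ω, X a t ω ∈ Set.Icc (0 : ℝ) 1)
    (hXadapted : ∀ a t, Measurable[F t] (X a t))
    (hXindep : ∀ a s t, t < s →
      Indep (MeasurableSpace.comap (X a s) (inferInstance : MeasurableSpace ℝ)) (F t) P)
    (hXfam : ∀ a, iIndepFun (X a) P)
    (μ : ℝ) (hμ0 : 0 ≤ μ) (hμ1 : μ ≤ 1)
    (hμle : ∀ a t, μ ≤ ∫ ω, X a t ω ∂P)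
    (ε : R → ℕ → Ω → ℝ)
    (hεval : ∀ a t ω, ε a t ω = 0 ∨ ε a t ω = 1)
    (hεprev : ∀ a t, Measurable[F (t - 1)] (ε a t))
    (hεsum : ∀ t ω, (∑ a, ε a t ω) = 0 ∨ (∑ a, ε a t ω) = 1)
    (S N : ℕ → Ω → ℝ)
    (hS : ∀ t ω, S t ω = ∑ s ∈ Finset.Icc 1 t, ∑ a, ε a s ω * X a s ω)
    (hN : ∀ t ω, N t ω = ∑ s ∈ Finset.Icc 1 t, ∑ a, ε a s ω)
    (l : ℝ) (hl : l < 0)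
    (W : ℕ → Ω → ℝ)
    (hW : ∀ t ω, W t ω =
      Real.exp (l * S t ω - N t ω * Real.log (1 - μ + μ * Real.exp l))) :
    Supermartingale W F P := by
  classical
  set φ : ℝ := Real.log (1 - μ + μ * Real.exp l) with hφdef
  have hel1 : Real.exp l < 1 := Real.exp_lt_one_iff.mpr hl
  have hexppos := Real.exp_pos l
  have hpos : 0 < 1 - μ + μ * Real.exp l := by nlinarith
  have hφ0 : φ ≤ 0 := Real.log_nonpos (le_of_lt hpos) (by nlinarith)
  have hexpφ : Real.exp φ = 1 - μ + μ * Real.exp l := Real.exp_log hpos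
  -- basic facts about ε
  have hε0 : ∀ a t ω, 0 ≤ ε a t ω := by
    intro a t ω; rcases hεval a t ω with h | h <;> simp [h]
  have hε1 : ∀ a t ω, ε a t ω ≤ 1 := by
    intro a t ω; rcases hεval a t ω with h | h <;> simp [h]
  have hεsum0 : ∀ t ω, 0 ≤ ∑ a, ε a t ω :=
    fun t ω => Finset.sum_nonneg fun a _ => hε0 a t ω
  have hεsum1 : ∀ t ω, (∑ a, ε a t ω) ≤ 1 := by
    intro t ω; rcases hεsum t ω with h | h <;> simp [h]
  -- measurability of ε and X w.r.t. F t
  have hεF : ∀ a s t, s ≤ t → Measurable[F t] (ε a s) := by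
    intro a s t hst
    exact (hεprev a s).mono (F.mono (le_trans (Nat.sub_le s 1) hst)) le_rfl
  have hXF : ∀ a s t, s ≤ t → Measurable[F t] (X a s) := by
    intro a s t hst
    exact (hXadapted a s).mono (F.mono hst) le_rfl
  have hSmeas : ∀ t, Measurable[F t] (S t) := by
    intro t
    have : S t = fun ω => ∑ s ∈ Finset.Icc 1 t, ∑ a, ε a s ω * X a s ω :=
      funext fun ω => hS t ω
    rw [this]
    exact Finset.measurable_sum _ fun s hs => Finset.measurable_sum _ fun a _ =>
      ((hεF a s t (Finset.mem_Icc.mp hs).2).mul (hXF a s t (Finset.mem_Icc.mp hs).2))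
  have hNmeas : ∀ t, Measurable[F t] (N t) := by
    intro t
    have : N t = fun ω => ∑ s ∈ Finset.Icc 1 t, ∑ a, ε a s ω := funext fun ω => hN t ω
    rw [this]
    exact Finset.measurable_sum _ fun s hs => Finset.measurable_sum _ fun a _ =>
      hεF a s t (Finset.mem_Icc.mp hs).2
  have hWmeas : ∀ t, Measurable[F t] (W t) := by
    intro t
    have : W t = fun ω => Real.exp (l * S t ω - N t ω * φ) := funext fun ω => hW t ω
    rw [this]
    exact Real.measurable_exp.comp
      (((measurable_const.mul (hSmeas t)).sub ((hNmeas t).mul measurable_const)))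
  -- bounds on S, N, W
  have hinnerle : ∀ s ω, ∑ a, ε a s ω * X a s ω ≤ ∑ a, ε a s ω := by
    intro s ω
    refine Finset.sum_le_sum fun a _ => ?_
    have := (hXbound a s ω).2
    nlinarith [hε0 a s ω, (hXbound a s ω).1]
  have hinner0 : ∀ s ω, 0 ≤ ∑ a, ε a s ω * X a s ω := by
    intro s ω
    exact Finset.sum_nonneg fun a _ => mul_nonneg (hε0 a s ω) (hXbound a s ω).1
  have hNbd : ∀ t ω, 0 ≤ N t ω ∧ N t ω ≤ t := by
    intro t ω
    rw [hN]
    constructor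
    · exact Finset.sum_nonneg fun s _ => hεsum0 s ω
    · calc (∑ s ∈ Finset.Icc 1 t, ∑ a, ε a s ω) ≤ ∑ s ∈ Finset.Icc 1 t, (1:ℝ) :=
            Finset.sum_le_sum fun s _ => hεsum1 s ω
        _ = t := by simp [Nat.card_Icc]
  have hSbd : ∀ t ω, 0 ≤ S t ω ∧ S t ω ≤ t := by
    intro t ω
    rw [hS]
    constructor
    · exact Finset.sum_nonneg fun s _ => hinner0 s ω
    · calc (∑ s ∈ Finset.Icc 1 t, ∑ a, ε a s ω * X a s ω)
          ≤ ∑ s ∈ Finset.Icc 1 t, (1:ℝ) :=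
            Finset.sum_le_sum fun s _ => le_trans (hinnerle s ω) (hεsum1 s ω)
        _ = t := by simp [Nat.card_Icc]
  have hWpos : ∀ t ω, 0 < W t ω := by intro t ω; rw [hW]; exact Real.exp_pos _
  have hWbd : ∀ t ω, |W t ω| ≤ Real.exp (t * (|l| + |φ|)) := by
    intro t ω
    rw [abs_of_pos (hWpos t ω), hW]
    apply Real.exp_le_exp.mpr
    have h1 : l * S t ω ≤ t * |l| := by
      have := (hSbd t ω).1; have := (hSbd t ω).2
      nlinarith [abs_nonneg l, neg_abs_le l, le_abs_self l]
    have h2 : -(N t ω * φ) ≤ t * |φ| := by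
      have := (hNbd t ω).1; have := (hNbd t ω).2
      nlinarith [abs_nonneg φ, neg_abs_le φ, le_abs_self φ]
    nlinarith
  have hWint : ∀ t, Integrable (W t) P := fun t =>
    integrable_of_bdd ((hWmeas t).mono (F.le t) le_rfl) _ (hWbd t)
  refine supermartingale_nat (fun t => ((hWmeas t).stronglyMeasurable)) hWint ?_
  intro t
  have hmle : (F t : MeasurableSpace Ω) ≤ m := F.le t
  set A : Ω → ℝ := fun ω => ∑ a, ε a (t+1) ω with hA
  set g : R → Ω → ℝ := fun a ω => Real.exp (l * X a (t+1) ω - φ) with hg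
  set Y : Ω → ℝ := fun ω => (1 - A ω) + ∑ a, ε a (t+1) ω * g a ω with hY
  have hone : ∀ ω, A ω = 1 → ∃ b, ε b (t+1) ω = 1 ∧ ∀ a, a ≠ b → ε a (t+1) ω = 0 := by
    intro ω hAω
    have hex : ∃ b ∈ Finset.univ, ε b (t+1) ω ≠ 0 := by
      by_contra h
      push_neg at h
      have : A ω = 0 := Finset.sum_eq_zero fun a ha => h a ha
      rw [this] at hAω; norm_num at hAω
    obtain ⟨b, -, hb⟩ := hex
    have hb1 : ε b (t+1) ω = 1 := (hεval b (t+1) ω).resolve_left hb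
    refine ⟨b, hb1, fun a hab => ?_⟩
    have hsplit : A ω = ε b (t+1) ω + ∑ a ∈ Finset.univ.erase b, ε a (t+1) ω :=
      (Finset.add_sum_erase _ _ (Finset.mem_univ b)).symm
    have hz : ∑ a ∈ Finset.univ.erase b, ε a (t+1) ω = 0 := by
      rw [hAω, hb1] at hsplit; linarith
    exact (Finset.sum_eq_zero_iff_of_nonneg (fun a _ => hε0 a (t+1) ω)).mp hz a
      (Finset.mem_erase.mpr ⟨hab, Finset.mem_univ a⟩)
  have hWY : W (t+1) = fun ω => W t ω * Y ω := by
    funext ω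
    have hSrec : S (t+1) ω = S t ω + ∑ a, ε a (t+1) ω * X a (t+1) ω := by
      rw [hS, hS, Finset.sum_Icc_succ_top (Nat.le_add_left 1 t)]
    have hNrec : N (t+1) ω = N t ω + A ω := by
      rw [hN, hN, Finset.sum_Icc_succ_top (Nat.le_add_left 1 t), hA]
    have hYexp : Y ω = Real.exp (l * (∑ a, ε a (t+1) ω * X a (t+1) ω) - A ω * φ) := by
      rcases hεsum (t+1) ω with h0 | h1
      · have hz : ∀ a, ε a (t+1) ω = 0 := fun a =>
          (Finset.sum_eq_zero_iff_of_nonneg (fun a _ => hε0 a (t+1) ω)).mp h0 a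
            (Finset.mem_univ a)
        have hA0 : A ω = 0 := h0
        simp [hY, hA0, hz]
      · obtain ⟨b, hb1, hb0⟩ := hone ω h1
        have hd : (∑ a, ε a (t+1) ω * X a (t+1) ω) = X b (t+1) ω := by
          rw [Finset.sum_eq_single b (fun a _ hab => by simp [hb0 a hab])
            (fun h => absurd (Finset.mem_univ b) h), hb1, one_mul]
        have hsumg : (∑ a, ε a (t+1) ω * g a ω) = g b ω := by
          rw [Finset.sum_eq_single b (fun a _ hab => by simp [hb0 a hab])
            (fun h => absurd (Finset.mem_univ b) h), hb1, one_mul]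
        have hA1 : A ω = 1 := h1
        rw [hY]; dsimp only
        rw [hsumg, hA1, hd, hg]
        simp
    rw [hW, hW, hSrec, hNrec, hYexp, ← Real.exp_add]
    congr 1
    ring
  -- measurability and integrability
  have hεFt : ∀ a, Measurable[F t] (ε a (t+1)) := fun a => hεprev a (t+1)
  have hAFt : Measurable[F t] A := Finset.measurable_sum _ fun a _ => hεFt a
  have hXm : ∀ a, Measurable (X a (t+1)) := fun a => (hXadapted a (t+1)).mono (F.le (t+1)) le_rfl
  have hgm : ∀ a, Measurable (g a) := fun a =>
    Real.measurable_exp.comp (((hXm a).const_mul l).sub measurable_const)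
  have hgbd : ∀ a ω, |g a ω| ≤ Real.exp (|l| + |φ|) := by
    intro a ω
    rw [hg, abs_of_pos (Real.exp_pos _)]
    apply Real.exp_le_exp.mpr
    have h1 := (hXbound a (t+1) ω).1
    have h2 := (hXbound a (t+1) ω).2
    have : l * X a (t+1) ω ≤ |l| := by nlinarith [neg_abs_le l, le_abs_self l, abs_nonneg l]
    nlinarith [neg_abs_le φ]
  have hgint : ∀ a, Integrable (g a) P := fun a => integrable_of_bdd (hgm a) _ (hgbd a)
  have hεm : ∀ a, Measurable (ε a (t+1)) := fun a => (hεFt a).mono (F.le t) le_rfl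
  set f1 : R → Ω → ℝ := fun a ω => ε a (t+1) ω * g a ω with hf1
  have hεgint : ∀ a, Integrable (f1 a) P := by
    intro a
    refine integrable_of_bdd ((hεm a).mul (hgm a)) (Real.exp (|l| + |φ|)) fun ω => ?_
    show |ε a (t+1) ω * g a ω| ≤ _
    rw [abs_mul]
    calc |ε a (t+1) ω| * |g a ω| ≤ 1 * Real.exp (|l| + |φ|) := by
          apply mul_le_mul _ (hgbd a ω) (abs_nonneg _) zero_le_one
          rw [abs_of_nonneg (hε0 a (t+1) ω)]; exact hε1 a (t+1) ω
      _ = _ := one_mul _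
  have hf0int : Integrable (fun ω => 1 - A ω) P := by
    refine integrable_of_bdd (measurable_const.sub (hAFt.mono (F.le t) le_rfl)) 1 fun ω => ?_
    rw [abs_le]
    constructor <;> [linarith [hεsum1 (t+1) ω]; linarith [hεsum0 (t+1) ω]]
  have hYint : Integrable Y P := by
    have : Y = (fun ω => 1 - A ω) + fun ω => ∑ a, ε a (t+1) ω * g a ω := rfl
    rw [this]
    exact hf0int.add (integrable_finset_sum _ fun a _ => hεgint a)
  -- conditional expectation of g a given F t is a constant
  set c : R → ℝ := fun a => ∫ ω, g a ω ∂P with hc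
  have hcondg : ∀ a, (P[g a|F t]) =ᵐ[P] fun _ => c a := by
    intro a
    have hXc : Measurable[MeasurableSpace.comap (X a (t+1))
        (inferInstance : MeasurableSpace ℝ)] (X a (t+1)) := measurable_iff_comap_le.mpr le_rfl
    have hgsm : StronglyMeasurable[MeasurableSpace.comap (X a (t+1))
        (inferInstance : MeasurableSpace ℝ)] (g a) :=
      (Real.measurable_exp.comp ((hXc.const_mul l).sub measurable_const)).stronglyMeasurable
    exact condExp_indep_eq ((hXm a).comap_le) hmle hgsm (hXindep a (t+1) t (Nat.lt_succ_self t))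
  -- bound on the constants
  have hcle : ∀ a, c a ≤ 1 := by
    intro a
    have hXint : Integrable (X a (t+1)) P := by
      refine integrable_of_bdd (hXm a) 1 fun ω => ?_
      rw [abs_le]
      exact ⟨by linarith [(hXbound a (t+1) ω).1], (hXbound a (t+1) ω).2⟩
    have h1 : ∀ ω, g a ω ≤ (1 + (Real.exp l - 1) * X a (t+1) ω) * Real.exp (-φ) := by
      intro ω
      have hcv := exp_conv (l := l) (hXbound a (t+1) ω).1 (hXbound a (t+1) ω).2
      have : g a ω = Real.exp (l * X a (t+1) ω) * Real.exp (-φ) := by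
        show Real.exp (l * X a (t+1) ω - φ) = _
        rw [sub_eq_add_neg, Real.exp_add]
      rw [this]
      nlinarith [Real.exp_pos (-φ)]
    have hint2 : Integrable (fun ω => (1 + (Real.exp l - 1) * X a (t+1) ω) * Real.exp (-φ)) P :=
      (((integrable_const 1).add (hXint.const_mul _)).mul_const _)
    have h2 : c a ≤ ∫ ω, (1 + (Real.exp l - 1) * X a (t+1) ω) * Real.exp (-φ) ∂P :=
      integral_mono (hgint a) hint2 h1
    have h3 : ∫ ω, (1 + (Real.exp l - 1) * X a (t+1) ω) * Real.exp (-φ) ∂P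
        = (1 + (Real.exp l - 1) * ∫ ω, X a (t+1) ω ∂P) * Real.exp (-φ) := by
      rw [integral_mul_const, integral_add (integrable_const 1) (hXint.const_mul _),
        integral_const, integral_const_mul]
      simp
    have h4 : (1 + (Real.exp l - 1) * ∫ ω, X a (t+1) ω ∂P) ≤ Real.exp φ := by
      rw [hexpφ]
      nlinarith [hμle a (t+1)]
    calc c a ≤ _ := h2
      _ = _ := h3
      _ ≤ Real.exp φ * Real.exp (-φ) := by nlinarith [Real.exp_pos (-φ)]
      _ = 1 := by rw [← Real.exp_add]; simp
  have hc0 : ∀ a, 0 ≤ c a := fun a => integral_nonneg fun ω => (Real.exp_pos _).le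
  -- conditional expectation of Y
  have hcondY : (P[Y|F t]) =ᵐ[P] fun ω => (1 - A ω) + ∑ a, ε a (t+1) ω * c a := by
    have hYsplit : Y = (fun ω => 1 - A ω) + ∑ a, f1 a := by
      funext ω
      simp [hY, hf1, Finset.sum_apply]
    rw [hYsplit]
    have e1 := condExp_add (μ := P) (m := F t) (f := fun ω => 1 - A ω) (g := ∑ a, f1 a)
      hf0int (integrable_finset_sum' _ fun a _ => hεgint a)
    have e2 : P[(fun ω => 1 - A ω)|F t] = fun ω => 1 - A ω :=
      condExp_of_stronglyMeasurable hmle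
        (measurable_const.sub hAFt).stronglyMeasurable hf0int
    have e3 := condExp_finset_sum (μ := P) (m := F t)
      (f := f1) (s := Finset.univ) fun a _ => hεgint a
    have e4 : ∀ a : R, P[f1 a|F t]
        =ᵐ[P] fun ω => ε a (t+1) ω * c a := by
      intro a
      have := condExp_mul_of_stronglyMeasurable_left (μ := P) (hεFt a).stronglyMeasurable
        (hεgint a) (hgint a)
      refine this.trans ?_
      filter_upwards [hcondg a] with ω hω
      simp only [Pi.mul_apply, hω]
    have e5 : (∑ a : R, P[f1 a|F t])
        =ᵐ[P] fun ω => ∑ a, ε a (t+1) ω * c a := by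
      have : ∀ᵐ ω ∂P, ∀ a : R, (P[f1 a|F t]) ω
          = ε a (t+1) ω * c a := by
        rw [ae_all_iff]; exact fun a => e4 a
      filter_upwards [this] with ω hω
      simp only [Finset.sum_apply]
      exact Finset.sum_congr rfl fun a _ => hω a
    refine e1.trans ?_
    rw [e2]
    filter_upwards [e3, e5] with ω hω3 hω5
    simp only [Pi.add_apply, hω3, hω5]
  -- conclude
  rw [hWY]
  have hprodint : Integrable (fun ω => W t ω * Y ω) P := hWY ▸ hWint (t+1)
  have hpull := condExp_mul_of_stronglyMeasurable_left (μ := P) (hWmeas t).stronglyMeasurable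
    hprodint hYint
  refine hpull.trans_le ?_
  filter_upwards [hcondY] with ω hω
  have hle1 : (P[Y|F t]) ω ≤ 1 := by
    rw [hω]
    have hsle : ∑ a, ε a (t+1) ω * c a ≤ A ω := by
      rw [hA]
      exact Finset.sum_le_sum fun a _ => by nlinarith [hε0 a (t+1) ω, hcle a, hc0 a]
    linarith
  have := hWpos t ω
  simp only [Pi.mul_apply]
  nlinarith
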